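/- arXiv:1506.07945 — 3 statements merged into one kernel-verified Lean document; each statement's English description precedes it below -/
import Mathlib

section
/- Let n be a non-negative integer and let s(m) denote the binary sum-of-digits function. Then for all x, y in a commutative ring (e.g. ℚ), (x+y)^{s(n)} = ∑ x^{s(m)} y^{s(n-m)}, where the sum is over all integers m with 0 ≤ m ≤ n such that the pair (m, n-m) is carry-free, i.e. every binary digit of m is less than or equal to the corresponding binary digit of n. -/
open scoped Classical

/-- Binary sum-of-digits function. -/
def sdig (m : ℕ) : ℕ := (Nat.digits 2 m).sum

/-- The `i`-th digit of `m` in base `b`. -/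
def dig (b m i : ℕ) : ℕ := m / b ^ i % b

lemma sdig_rec (m : ℕ) : sdig m = m % 2 + sdig (m / 2) := by
  rcases Nat.eq_zero_or_pos m with h | h
  · simp [h, sdig]
  · rw [sdig, Nat.digits_def' (by norm_num : (1:ℕ) < 2) h]
    simp [sdig]

lemma dig_zero (m : ℕ) : dig 2 m 0 = m % 2 := by simp [dig]

lemma dig_succ (m i : ℕ) : dig 2 m (i + 1) = dig 2 (m / 2) i := by
  simp [dig, pow_succ, Nat.div_div_eq_div_mul, mul_comm]

lemma aux (x y : ℚ) : ∀ n : ℕ, (x + y) ^ sdig n =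
      ∑ m ∈ (Finset.range (n + 1)).filter (fun m => ∀ i, dig 2 m i ≤ dig 2 n i),
        x ^ sdig m * y ^ sdig (n - m) := by
  intro n
  induction n using Nat.strong_induction_on with
  | _ n ih =>
    rcases Nat.eq_zero_or_pos n with rfl | hn
    · simp only [Nat.zero_add, Finset.range_one]
      rw [Finset.filter_singleton, if_pos (fun i => le_refl _)]
      simp [sdig]
    · set q := n / 2 with hq
      set r := n % 2 with hr
      have hqr : n = 2 * q + r := by omega
      have hr2 : r < 2 := by omega
      have hqn : q < n := by omega
      have key : ∑ m ∈ (Finset.range (n + 1)).filter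
            (fun m => ∀ i, dig 2 m i ≤ dig 2 n i),
            x ^ sdig m * y ^ sdig (n - m)
          = ∑ p ∈ ((Finset.range (q + 1)).filter
              (fun m => ∀ i, dig 2 m i ≤ dig 2 q i)) ×ˢ Finset.range (r + 1),
            (x ^ sdig p.1 * y ^ sdig (q - p.1)) * (x ^ p.2 * y ^ (r - p.2)) := by
        apply Finset.sum_nbij' (i := fun m => (m / 2, m % 2))
          (j := fun p => 2 * p.1 + p.2)
        · intro m hm
          simp only [Finset.mem_filter, Finset.mem_range] at hm
          obtain ⟨hm1, hm2⟩ := hm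
          simp only [Finset.mem_product, Finset.mem_filter, Finset.mem_range]
          have h0 := hm2 0
          rw [dig_zero, dig_zero] at h0
          refine ⟨⟨by omega, fun i => ?_⟩, by omega⟩
          have := hm2 (i + 1)
          rwa [dig_succ, dig_succ] at this
        · intro p hp
          simp only [Finset.mem_product, Finset.mem_filter, Finset.mem_range] at hp
          obtain ⟨⟨hp1, hp2⟩, hp3⟩ := hp
          simp only [Finset.mem_filter, Finset.mem_range]
          refine ⟨by omega, fun i => ?_⟩
          cases i with
          | zero =>
            rw [dig_zero, dig_zero]
            omega
          | succ i =>
            rw [dig_succ, dig_succ]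
            have h1 : (2 * p.1 + p.2) / 2 = p.1 := by omega
            have h2 : n / 2 = q := hq.symm
            rw [h1, h2]
            exact hp2 i
        · intro m _; omega
        · intro p hp
          simp only [Finset.mem_product, Finset.mem_filter, Finset.mem_range] at hp
          have : (2 * p.1 + p.2) / 2 = p.1 ∧ (2 * p.1 + p.2) % 2 = p.2 := by omega
          simp [this.1, this.2]
        · intro m hm
          simp only [Finset.mem_filter, Finset.mem_range] at hm
          obtain ⟨hm1, hm2⟩ := hm
          have h0 := hm2 0
          rw [dig_zero, dig_zero] at h0
          have e1 : sdig m = m % 2 + sdig (m / 2) := sdig_rec m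
          have e2 : sdig (n - m) = (n - m) % 2 + sdig ((n - m) / 2) := sdig_rec (n - m)
          have e3 : (n - m) % 2 = r - m % 2 := by omega
          have e4 : (n - m) / 2 = q - m / 2 := by omega
          rw [e1, e2, e3, e4, pow_add, pow_add]
          ring
      rw [key, Finset.sum_product]
      have hinner : ∀ a ∈ (Finset.range (q + 1)).filter
            (fun m => ∀ i, dig 2 m i ≤ dig 2 q i),
          ∑ c ∈ Finset.range (r + 1),
            (x ^ sdig a * y ^ sdig (q - a)) * (x ^ c * y ^ (r - c))
          = (x ^ sdig a * y ^ sdig (q - a)) * (x + y) ^ r := by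
        intro a _
        rw [← Finset.mul_sum]
        congr 1
        interval_cases r
        · simp
        · simp [Finset.sum_range_succ]
          ring
      rw [Finset.sum_congr rfl hinner, ← Finset.sum_mul, ← ih q hqn]
      rw [sdig_rec n, ← hq, ← hr, pow_add]
      ring

/-- **Digital binomial theorem.** -/
theorem digital_binomial_theorem (n : ℕ) (x y : ℚ) :
    (x + y) ^ sdig n =
      ∑ m ∈ (Finset.range (n + 1)).filter (fun m => ∀ i, dig 2 m i ≤ dig 2 n i),
        x ^ sdig m * y ^ sdig (n - m) := by
  exact aux x y n
end

section
/- Let n be a non-negative integer with binary expansion n = n_{N-1}·2^{N-1} + ⋯ + n_0·2^0 (each n_i ∈ {0,1}). Then for all x, y, q in ℚ (or any commutative ring), ∏_{i=0}^{N-1} C(x + q^i·y + n_i - 1, n_i) = ∑ q^{z_n(m)} x^{s(m)} y^{s(n-m)}, where the sum is over all 0 ≤ m ≤ n with (m, n-m) carry-free, C(t, 0) = 1 and C(t, 1) = t denote the generalized binomial coefficients in the ring, and m has binary digits m_i. -/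
open scoped Classical

/-- `z_n(m) = ∑_{k=0}^{N-1} k·(1 - δ(n_k, m_k))`, the weighted count of positions
among the `N` lowest binary digits at which `m` and `n` differ. -/
def zfun (N n m : ℕ) : ℕ :=
  ∑ k ∈ Finset.range N, k * (1 - if dig 2 n k = dig 2 m k then 1 else 0)

/-- The generalized binomial coefficient `C(t, d) = t(t-1)⋯(t-d+1)/d!`. -/
def genChoose (t : ℚ) (d : ℕ) : ℚ :=
  (∏ i ∈ Finset.range d, (t - i)) / (Nat.factorial d)

lemma dig_le_one (m i : ℕ) : dig 2 m i ≤ 1 := by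
  have := Nat.mod_lt (m / 2 ^ i) (show 0 < 2 by norm_num)
  unfold dig; omega

lemma sum_two_pow (N : ℕ) : ∑ i ∈ Finset.range N, 2 ^ i = 2 ^ N - 1 := by
  induction N with
  | zero => simp
  | succ n ih =>
    rw [Finset.sum_range_succ, ih, pow_succ]
    have : 1 ≤ 2 ^ n := Nat.one_le_two_pow
    omega

lemma sum_two_pow_lt {N : ℕ} {t : Finset ℕ} (ht : t ⊆ Finset.range N) :
    ∑ i ∈ t, 2 ^ i < 2 ^ N := by
  have h1 : ∑ i ∈ t, 2 ^ i ≤ ∑ i ∈ Finset.range N, 2 ^ i :=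
    Finset.sum_le_sum_of_subset ht
  have h2 : 1 ≤ 2 ^ N := Nat.one_le_two_pow
  rw [sum_two_pow] at h1
  omega

lemma dig_sum_pow (t : Finset ℕ) :
    ∀ j, dig 2 (∑ i ∈ t, 2 ^ i) j = if j ∈ t then 1 else 0 := by
  induction t using Finset.induction_on_max with
  | empty => intro j; simp [dig]
  | insert a s ha ih =>
    intro j
    have hna : a ∉ s := fun h => lt_irrefl a (ha a h)
    have hsub : s ⊆ Finset.range a := fun x hx => Finset.mem_range.mpr (ha x hx)
    have hlt : ∑ i ∈ s, 2 ^ i < 2 ^ a := sum_two_pow_lt hsub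
    rw [Finset.sum_insert hna]
    rcases lt_trichotomy j a with hja | hja | hja
    · have h2a : 2 ^ a = 2 ^ j * (2 * 2 ^ (a - j - 1)) := by
        rw [← pow_succ']
        rw [← pow_add]
        congr 1
        omega
      unfold dig
      rw [h2a, Nat.mul_add_div (by positivity : 0 < 2 ^ j),
        Nat.mul_add_mod]
      have : j ∈ insert a s ↔ j ∈ s := by
        simp [Finset.mem_insert, (Nat.ne_of_lt hja)]
      rw [if_congr this rfl rfl]
      exact ih j
    · subst hja
      unfold dig
      have : (2 ^ j + ∑ i ∈ s, 2 ^ i) / 2 ^ j = (∑ i ∈ s, 2 ^ i) / 2 ^ j + 1 := by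
        rw [add_comm]
        exact Nat.add_div_right _ (by positivity)
      rw [this, Nat.div_eq_of_lt hlt]
      simp
    · have hj : j ∉ insert a s := by
        simp only [Finset.mem_insert]
        rintro (rfl | h)
        · exact lt_irrefl _ hja
        · exact absurd (ha j h) (by omega)
      rw [if_neg hj]
      unfold dig
      have : 2 ^ a + ∑ i ∈ s, 2 ^ i < 2 ^ j := by
        have : 2 ^ (a + 1) ≤ 2 ^ j := Nat.pow_le_pow_right (by norm_num) (by omega)
        have h2 : 2 ^ (a+1) = 2 ^ a + 2 ^ a := by rw [pow_succ]; ring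
        omega
      rw [Nat.div_eq_of_lt this]

lemma mod_two_pow_sum (N m : ℕ) : m % 2 ^ N = ∑ i ∈ Finset.range N, dig 2 m i * 2 ^ i := by
  induction N with
  | zero => simp [Nat.mod_one]
  | succ n ih =>
    rw [Finset.sum_range_succ, ← ih]
    have h2 : m % 2 ^ (n + 1) % 2 ^ n = m % 2 ^ n :=
      Nat.mod_mod_of_dvd m (pow_dvd_pow 2 (Nat.le_succ n))
    have h4 : dig 2 m n = m % 2 ^ (n + 1) / 2 ^ n := by
      unfold dig
      rw [pow_succ]
      exact (Nat.mod_mul_right_div_self m (2 ^ n) 2).symm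
    rw [← h2, h4]
    exact (Nat.mod_add_div' (m % 2 ^ (n + 1)) (2 ^ n)).symm

lemma eq_sum_filter {N m : ℕ} (hm : m < 2 ^ N) :
    m = ∑ i ∈ (Finset.range N).filter (fun i => dig 2 m i = 1), 2 ^ i := by
  conv_lhs => rw [← Nat.mod_eq_of_lt hm, mod_two_pow_sum]
  rw [Finset.sum_filter]
  apply Finset.sum_congr rfl
  intro i _
  have h := dig_le_one m i
  interval_cases h : dig 2 m i <;> simp

lemma sdig_eq_sum (N : ℕ) : ∀ m < 2 ^ N, sdig m = ∑ i ∈ Finset.range N, dig 2 m i := by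
  induction N with
  | zero => intro m hm; interval_cases m; simp [sdig]
  | succ n ih =>
    intro m hm
    rcases Nat.eq_zero_or_pos m with rfl | h0
    · simp [sdig, dig]
    · have hrec : sdig m = m % 2 + sdig (m / 2) := by
        unfold sdig
        rw [Nat.digits_def' (by norm_num : 1 < 2) h0]
        simp
      have hdiv : m / 2 < 2 ^ n := by
        rw [Nat.div_lt_iff_lt_mul (by norm_num)]
        rw [pow_succ] at hm
        exact hm
      rw [hrec, ih (m / 2) hdiv, Finset.sum_range_succ']
      have hd0 : dig 2 m 0 = m % 2 := by unfold dig; simp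
      have hds : ∀ i, dig 2 m (i + 1) = dig 2 (m / 2) i := by
        intro i
        unfold dig
        rw [Nat.div_div_eq_div_mul, ← pow_succ']
      simp only [hds, hd0]
      omega

lemma sdig_sum_pow {N : ℕ} {t : Finset ℕ} (ht : t ⊆ Finset.range N) :
    sdig (∑ i ∈ t, 2 ^ i) = t.card := by
  rw [sdig_eq_sum N _ (sum_two_pow_lt ht)]
  have : ∀ i ∈ Finset.range N, dig 2 (∑ i ∈ t, 2 ^ i) i = if i ∈ t then 1 else 0 :=
    fun i _ => dig_sum_pow t i
  rw [Finset.sum_congr rfl this, Finset.sum_ite_mem,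
    Finset.inter_eq_right.mpr ht, Finset.card_eq_sum_ones]

lemma genChoose_zero (t : ℚ) : genChoose t 0 = 1 := by simp [genChoose]

lemma genChoose_one (t : ℚ) : genChoose t 1 = t := by
  simp [genChoose, Nat.factorial]

/-- **q-digital binomial theorem.** -/
theorem q_digital_binomial_theorem (N n : ℕ) (hn : n < 2 ^ N) (x y q : ℚ) :
    (∏ i ∈ Finset.range N, genChoose (x + q ^ i * y + (dig 2 n i : ℚ) - 1) (dig 2 n i)) =
      ∑ m ∈ (Finset.range (n + 1)).filter (fun m => ∀ i, dig 2 m i ≤ dig 2 n i),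
        q ^ zfun N n m * x ^ sdig m * y ^ sdig (n - m) := by
  classical
  set S : Finset ℕ := (Finset.range N).filter (fun i => dig 2 n i = 1) with hS
  have hSsub : S ⊆ Finset.range N := Finset.filter_subset _ _
  have hnS : n = ∑ i ∈ S, 2 ^ i := eq_sum_filter hn
  have hdigS : ∀ i, dig 2 n i = if i ∈ S then 1 else 0 := by
    intro i
    rw [hnS]
    rw [dig_sum_pow]
  -- LHS
  have hL : (∏ i ∈ Finset.range N, genChoose (x + q ^ i * y + (dig 2 n i : ℚ) - 1) (dig 2 n i))
      = ∏ i ∈ S, (x + q ^ i * y) := by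
    rw [hS, Finset.prod_filter]
    apply Finset.prod_congr rfl
    intro i _
    have h := dig_le_one n i
    interval_cases h : dig 2 n i
    · simp [genChoose_zero]
    · rw [if_pos rfl, genChoose_one]
      push_cast
      ring
  rw [hL, Finset.prod_add]
  symm
  apply Finset.sum_nbij' (fun m => (Finset.range N).filter (fun i => dig 2 m i = 1))
    (fun t => ∑ i ∈ t, 2 ^ i)
  · -- hi : maps into powerset
    intro m hm
    simp only [Finset.mem_filter, Finset.mem_range] at hm
    rw [Finset.mem_powerset]
    intro i hi
    simp only [Finset.mem_filter, Finset.mem_range] at hi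
    simp only [hS, Finset.mem_filter, Finset.mem_range]
    refine ⟨hi.1, ?_⟩
    have := hm.2 i
    have := dig_le_one n i
    omega
  · -- hj : maps into filter set
    intro t ht
    rw [Finset.mem_powerset] at ht
    simp only [Finset.mem_filter, Finset.mem_range]
    constructor
    · have : ∑ i ∈ t, 2 ^ i ≤ ∑ i ∈ S, 2 ^ i := Finset.sum_le_sum_of_subset ht
      omega
    · intro i
      rw [dig_sum_pow, hdigS i]
      by_cases h : i ∈ t
      · rw [if_pos h, if_pos (ht h)]
      · simp [h]
  · -- left_inv
    intro m hm
    simp only [Finset.mem_filter, Finset.mem_range] at hm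
    exact (eq_sum_filter (lt_of_lt_of_le hm.1 (Nat.succ_le_of_lt hn))).symm
  · -- right_inv
    intro t ht
    rw [Finset.mem_powerset] at ht
    ext i
    simp only [Finset.mem_filter, Finset.mem_range, dig_sum_pow]
    constructor
    · rintro ⟨-, h⟩
      by_contra hc
      simp [hc] at h
    · intro h
      exact ⟨Finset.mem_range.mp (hSsub (ht h)), by simp [h]⟩
  · -- terms
    intro m hm
    simp only [Finset.mem_filter, Finset.mem_range] at hm
    have hmlt : m < 2 ^ N := lt_of_lt_of_le hm.1 (Nat.succ_le_of_lt hn)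
    set t : Finset ℕ := (Finset.range N).filter (fun i => dig 2 m i = 1) with htdef
    have htr : t ⊆ Finset.range N := Finset.filter_subset _ _
    have htS : t ⊆ S := by
      intro i hi
      simp only [htdef, Finset.mem_filter, Finset.mem_range] at hi
      simp only [hS, Finset.mem_filter, Finset.mem_range]
      refine ⟨hi.1, ?_⟩
      have := hm.2 i
      have := dig_le_one n i
      omega
    have hmt : m = ∑ i ∈ t, 2 ^ i := eq_sum_filter hmlt
    have hdigm : ∀ i, dig 2 m i = if i ∈ t then 1 else 0 := by
      intro i; rw [hmt, dig_sum_pow]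
    -- n - m
    have hsplit : ∑ i ∈ S \ t, 2 ^ i + ∑ i ∈ t, 2 ^ i = n := by
      rw [hnS]; exact Finset.sum_sdiff htS
    have hnm : n - m = ∑ i ∈ S \ t, 2 ^ i := by omega
    -- sdig values
    have hsm : sdig m = t.card := by rw [hmt]; exact sdig_sum_pow htr
    have hsnm : sdig (n - m) = (S \ t).card := by
      rw [hnm]
      exact sdig_sum_pow (fun i hi => hSsub (Finset.mem_sdiff.mp hi).1)
    -- zfun
    have hz : zfun N n m = ∑ i ∈ S \ t, i := by
      unfold zfun
      have : ∀ k ∈ Finset.range N,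
          k * (1 - if dig 2 n k = dig 2 m k then 1 else 0)
            = if k ∈ S \ t then k else 0 := by
        intro k _
        rw [hdigS k, hdigm k]
        by_cases hkS : k ∈ S
        · by_cases hkt : k ∈ t
          · simp [hkS, hkt]
          · simp [hkS, hkt]
        · have hkt : k ∉ t := fun h => hkS (htS h)
          simp [hkS, hkt]
      rw [Finset.sum_congr rfl this, Finset.sum_ite_mem,
        Finset.inter_eq_right.mpr (fun i hi => hSsub (Finset.mem_sdiff.mp hi).1)]
    rw [hsm, hsnm, hz]
    rw [Finset.prod_const, Finset.prod_mul_distrib, Finset.prod_const,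
      Finset.prod_pow_eq_pow_sum]
    ring
end

section
/- Let b ≥ 2 and N ≥ 0 be integers. Then for all x_0,…,x_{N-1}, y_0,…,y_{N-1}, r_0,…,r_{N-1} in ℚ (or any commutative ℚ-algebra), the Sierpiński matrices are multiplicative: S_{b,N}(x_0,…,x_{N-1}; r_0,…,r_{N-1}) · S_{b,N}(y_0,…,y_{N-1}; r_0,…,r_{N-1}) = S_{b,N}(x_0+y_0,…,x_{N-1}+y_{N-1}; r_0,…,r_{N-1}). -/
open scoped Classical

/-- The generalized binomial coefficient `B(x; r; d) = x(x+r)(x+2r)⋯(x+(d-1)r)/d!`. -/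
def genBinom (x r : ℚ) (d : ℕ) : ℚ :=
  (∏ i ∈ Finset.range d, (x + i * r)) / (Nat.factorial d)

/-- The `N`-variable Sierpiński matrix `S_{b,N}(x₀,…,x_{N-1}; r₀,…,r_{N-1})`:
the `b^N × b^N` matrix whose `(j,k)`-entry is `∏_{i<N} B(xᵢ; rᵢ; dᵢ)` when `k ≤ j` and
`k ⪯_b j` (each base-`b` digit of `k` is at most the corresponding digit of `j`),
where `dᵢ` are the base-`b` digits of `j - k`, and `0` otherwise. -/
noncomputable def Sierp (b N : ℕ) (x r : ℕ → ℚ) : Matrix (Fin (b ^ N)) (Fin (b ^ N)) ℚ :=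
  fun j k =>
    if (k : ℕ) ≤ (j : ℕ) ∧ ∀ i, dig b (k : ℕ) i ≤ dig b (j : ℕ) i then
      ∏ i ∈ Finset.range N, genBinom (x i) (r i) (dig b ((j : ℕ) - (k : ℕ)) i)
    else 0

open Finset
open Finset

-- digit lemmas
theorem sum_dig (b m L : ℕ) : ∑ i ∈ range L, dig b m i * b ^ i = m % b ^ L := by
  induction L with
  | zero => simp [Nat.mod_one]
  | succ L ih => rw [Nat.mod_pow_succ, sum_range_succ, ih, dig, Nat.mul_comm]

theorem le_of_dig_le {b k j : ℕ} (hb : 2 ≤ b) (h : ∀ i, dig b k i ≤ dig b j i) : k ≤ j := by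
  set L := max k j + 1 with hL
  have hk : k < b ^ L := lt_of_le_of_lt (by omega) (Nat.lt_pow_self (n := L) hb)
  have hj : j < b ^ L := lt_of_le_of_lt (by omega) (Nat.lt_pow_self (n := L) hb)
  calc k = k % b ^ L := (Nat.mod_eq_of_lt hk).symm
    _ = ∑ i ∈ range L, dig b k i * b ^ i := (sum_dig b k L).symm
    _ ≤ ∑ i ∈ range L, dig b j i * b ^ i :=
        Finset.sum_le_sum fun i _ => Nat.mul_le_mul_right _ (h i)
    _ = j % b ^ L := sum_dig b j L
    _ ≤ j := Nat.mod_le _ _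

theorem dig_eq_zero {b m i : ℕ} {N : ℕ} (hm : m < b ^ N) (hi : N ≤ i) (hb : 1 ≤ b) :
    dig b m i = 0 := by
  have : m < b ^ i := lt_of_lt_of_le hm (Nat.pow_le_pow_right hb hi)
  simp [dig, Nat.div_eq_of_lt this]

theorem dig_mod_pow {b m N i : ℕ} (hi : i < N) : dig b (m % b ^ N) i = dig b m i := by
  have h1 : b ^ N = b ^ i * b ^ (N - i) := by rw [← pow_add]; congr 1; omega
  unfold dig
  rw [h1, Nat.mod_mul_right_div_self]
  exact Nat.mod_mod_of_dvd _ (dvd_pow_self b (by omega))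
noncomputable def prodP (z r : ℚ) (d : ℕ) : ℚ := ∏ i ∈ Finset.range d, (z + i * r)

theorem prodP_succ (z r : ℚ) (d : ℕ) : prodP z r (d + 1) = prodP z r d * (z + d * r) :=
  Finset.prod_range_succ _ _

@[simp] theorem prodP_zero (z r : ℚ) : prodP z r 0 = 1 := rfl

theorem key_vandermonde (x y r : ℚ) : ∀ d : ℕ,
    ∑ e ∈ range (d + 1), (d.choose e : ℚ) * (prodP x r e * prodP y r (d - e)) =
      prodP (x + y) r d := by
  intro d
  induction d with
  | zero => simp
  | succ d ih =>
    have hsplit : ∀ e ∈ range (d + 1),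
        (d.choose e : ℚ) * (prodP x r e * prodP y r (d - e)) * ((x + y) + d * r) =
        (d.choose e : ℚ) * (prodP x r (e + 1) * prodP y r (d - e)) +
        (d.choose e : ℚ) * (prodP x r e * prodP y r (d + 1 - e)) := by
      intro e he
      rw [mem_range] at he
      have hc : ((d - e : ℕ) : ℚ) = (d : ℚ) - (e : ℚ) := by
        rw [Nat.cast_sub (by omega)]
      rw [show d + 1 - e = (d - e) + 1 by omega, prodP_succ, prodP_succ, hc]
      ring
    rw [prodP_succ, ← ih, sum_mul, sum_congr rfl hsplit, sum_add_distrib]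
    rw [Finset.sum_range_succ' (fun e => ((d + 1).choose e : ℚ) *
      (prodP x r e * prodP y r (d + 1 - e))) (d + 1)]
    simp only [Nat.succ_sub_succ, Nat.choose_succ_succ, Nat.choose_zero_right, Nat.cast_one,
      one_mul, Nat.cast_add, add_mul, Nat.sub_zero, prodP_zero]
    rw [sum_add_distrib]
    rw [Finset.sum_range_succ' (fun e => (d.choose e : ℚ) *
      (prodP x r e * prodP y r (d + 1 - e))) d]
    rw [Finset.sum_range_succ (fun e => (d.choose (e + 1) : ℚ) *
      (prodP x r (e + 1) * prodP y r (d - e))) d]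
    simp only [Nat.succ_sub_succ, Nat.choose_zero_right, Nat.cast_one, one_mul, Nat.sub_zero,
      Nat.choose_succ_self, Nat.cast_zero, zero_mul, add_zero, prodP_zero]
    ring

theorem genBinom_vandermonde (x y r : ℚ) (d : ℕ) :
    ∑ e ∈ range (d + 1), genBinom x r (d - e) * genBinom y r e = genBinom (x + y) r d := by
  have h : ∀ e ∈ range (d + 1), genBinom x r (d - e) * genBinom y r e =
      (d.choose e : ℚ) * (prodP y r e * prodP x r (d - e)) / (d.factorial : ℚ) := by
    intro e he
    rw [mem_range] at he
    show (prodP x r (d - e) / _) * (prodP y r e / _) = _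
    rw [div_mul_div_comm, div_eq_div_iff (by positivity) (by positivity)]
    rw [← Nat.cast_mul, ← Nat.choose_mul_factorial_mul_factorial (Nat.le_of_lt_succ he)]
    push_cast
    ring
  rw [sum_congr rfl h, ← sum_div, key_vandermonde y x r d]
  show _ = prodP (x + y) r d / _
  rw [add_comm y x]

noncomputable def S1 (b : ℕ) (z w : ℚ) : Matrix (Fin b) (Fin b) ℚ :=
  fun q p => if (p : ℕ) ≤ (q : ℕ) then genBinom z w ((q : ℕ) - (p : ℕ)) else 0

theorem S1_mul (b : ℕ) (z z' w : ℚ) : S1 b z w * S1 b z' w = S1 b (z + z') w := by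
  ext q p
  rw [Matrix.mul_apply]
  by_cases hpq : (p : ℕ) ≤ (q : ℕ)
  · have hterm : ∀ m : Fin b, S1 b z w q m * S1 b z' w m p =
        if (p : ℕ) ≤ (m : ℕ) ∧ (m : ℕ) ≤ (q : ℕ) then
          genBinom z w ((q : ℕ) - (m : ℕ)) * genBinom z' w ((m : ℕ) - (p : ℕ)) else 0 := by
      intro m
      unfold S1
      by_cases h1 : (m : ℕ) ≤ (q : ℕ) <;> by_cases h2 : (p : ℕ) ≤ (m : ℕ) <;>
        simp [h1, h2]
    rw [Finset.sum_congr rfl fun m _ => hterm m]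
    rw [Fin.sum_univ_eq_sum_range (fun m => if (p : ℕ) ≤ m ∧ m ≤ (q : ℕ) then
      genBinom z w ((q : ℕ) - m) * genBinom z' w (m - (p : ℕ)) else 0) b]
    rw [← Finset.sum_filter]
    have h2 : (range b).filter (fun m => (p : ℕ) ≤ m ∧ m ≤ (q : ℕ)) =
        (range ((q : ℕ) - (p : ℕ) + 1)).image (fun e => (p : ℕ) + e) := by
      ext m
      simp only [mem_filter, mem_range, mem_image]
      constructor
      · intro ⟨h1, h2, h3⟩
        exact ⟨m - (p : ℕ), by omega, by omega⟩
      · rintro ⟨e, he, rfl⟩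
        have := q.isLt
        omega
    rw [h2, Finset.sum_image (by intro a _ c _ h; simp only at h; omega)]
    have h3 : ∀ e ∈ range ((q : ℕ) - (p : ℕ) + 1),
        genBinom z w ((q : ℕ) - ((p : ℕ) + e)) * genBinom z' w ((p : ℕ) + e - (p : ℕ)) =
        genBinom z w ((q : ℕ) - (p : ℕ) - e) * genBinom z' w e := by
      intro e he
      rw [mem_range] at he
      rw [show (q : ℕ) - ((p : ℕ) + e) = (q : ℕ) - (p : ℕ) - e by omega,
        show (p : ℕ) + e - (p : ℕ) = e by omega]
    rw [Finset.sum_congr rfl h3, genBinom_vandermonde]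
    unfold S1
    rw [if_pos hpq]
  · rw [S1]
    simp only [hpq, if_false]
    apply Finset.sum_eq_zero
    intro m _
    unfold S1
    by_cases h1 : (m : ℕ) ≤ (q : ℕ) <;> by_cases h2 : (p : ℕ) ≤ (m : ℕ) <;>
      simp [h1, h2] <;> omega

def splitEquiv (b N : ℕ) (hb : 2 ≤ b) : Fin (b ^ (N + 1)) ≃ Fin b × Fin (b ^ N) where
  toFun j := (⟨(j : ℕ) / b ^ N, by
      rw [Nat.div_lt_iff_lt_mul (pow_pos (by omega : 0 < b) N)]
      have h := j.isLt
      calc (j : ℕ) < b ^ (N + 1) := h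
        _ = b * b ^ N := by ring⟩,
    ⟨(j : ℕ) % b ^ N, Nat.mod_lt _ (pow_pos (by omega : 0 < b) N)⟩)
  invFun qs := ⟨(qs.1 : ℕ) * b ^ N + (qs.2 : ℕ), by
    have h1 := qs.1.isLt
    have h2 := qs.2.isLt
    have : ((qs.1 : ℕ) + 1) * b ^ N ≤ b * b ^ N := Nat.mul_le_mul_right _ (by omega)
    rw [pow_succ]
    nlinarith⟩
  left_inv j := by
    ext
    show (j : ℕ) / b ^ N * b ^ N + (j : ℕ) % b ^ N = (j : ℕ)
    rw [Nat.mul_comm, Nat.div_add_mod]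
  right_inv qs := by
    have h2 := qs.2.isLt
    have hpos : 0 < b ^ N := pow_pos (by omega : 0 < b) N
    ext
    · show ((qs.1 : ℕ) * b ^ N + (qs.2 : ℕ)) / b ^ N = (qs.1 : ℕ)
      rw [add_comm, Nat.add_mul_div_right _ _ hpos, Nat.div_eq_of_lt h2, zero_add]
    · show ((qs.1 : ℕ) * b ^ N + (qs.2 : ℕ)) % b ^ N = (qs.2 : ℕ)
      rw [add_comm, Nat.add_mul_mod_self_right, Nat.mod_eq_of_lt h2]

theorem Sierp_succ (b N : ℕ) (hb : 2 ≤ b) (x r : ℕ → ℚ) :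
    Sierp b (N + 1) x r =
      (Matrix.kroneckerMap (· * ·) (S1 b (x N) (r N)) (Sierp b N x r)).submatrix
        (splitEquiv b N hb) (splitEquiv b N hb) := by
  ext j k
  have hpos : 0 < b ^ N := pow_pos (by omega : 0 < b) N
  rw [Matrix.submatrix_apply, Matrix.kroneckerMap_apply]
  show (if (k : ℕ) ≤ (j : ℕ) ∧ ∀ i, dig b (k : ℕ) i ≤ dig b (j : ℕ) i then
      ∏ i ∈ Finset.range (N + 1), genBinom (x i) (r i) (dig b ((j : ℕ) - (k : ℕ)) i)
    else 0) =
    (if (k : ℕ) / b ^ N ≤ (j : ℕ) / b ^ N then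
      genBinom (x N) (r N) ((j : ℕ) / b ^ N - (k : ℕ) / b ^ N) else 0) *
    (if (k : ℕ) % b ^ N ≤ (j : ℕ) % b ^ N ∧
        ∀ i, dig b ((k : ℕ) % b ^ N) i ≤ dig b ((j : ℕ) % b ^ N) i then
      ∏ i ∈ Finset.range N, genBinom (x i) (r i) (dig b ((j : ℕ) % b ^ N - (k : ℕ) % b ^ N) i)
    else 0)
  have hJ : (j : ℕ) < b ^ (N + 1) := j.isLt
  have hK : (k : ℕ) < b ^ (N + 1) := k.isLt
  have hq_lt : ∀ m : ℕ, m < b ^ (N + 1) → m / b ^ N < b := by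
    intro m hm
    rw [Nat.div_lt_iff_lt_mul hpos]
    calc m < b ^ (N + 1) := hm
      _ = b * b ^ N := by ring
  have hdigN : ∀ m : ℕ, m < b ^ (N + 1) → dig b m N = m / b ^ N := fun m hm =>
    Nat.mod_eq_of_lt (hq_lt m hm)
  have hcond : ((k : ℕ) ≤ (j : ℕ) ∧ ∀ i, dig b (k : ℕ) i ≤ dig b (j : ℕ) i) ↔
      ((k : ℕ) / b ^ N ≤ (j : ℕ) / b ^ N ∧
       ((k : ℕ) % b ^ N ≤ (j : ℕ) % b ^ N ∧
        ∀ i, dig b ((k : ℕ) % b ^ N) i ≤ dig b ((j : ℕ) % b ^ N) i)) := by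
    constructor
    · rintro ⟨-, h⟩
      have hs : ∀ i, dig b ((k : ℕ) % b ^ N) i ≤ dig b ((j : ℕ) % b ^ N) i := by
        intro i
        rcases lt_or_ge i N with hi | hi
        · rw [dig_mod_pow hi, dig_mod_pow hi]; exact h i
        · rw [dig_eq_zero (Nat.mod_lt _ hpos) hi (by omega)]; exact Nat.zero_le _
      refine ⟨?_, le_of_dig_le hb hs, hs⟩
      have hN := h N
      rwa [hdigN _ hJ, hdigN _ hK] at hN
    · rintro ⟨hq, -, hd⟩
      have h : ∀ i, dig b (k : ℕ) i ≤ dig b (j : ℕ) i := by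
        intro i
        rcases lt_trichotomy i N with hi | hi | hi
        · rw [← dig_mod_pow (m := (k : ℕ)) hi, ← dig_mod_pow (m := (j : ℕ)) hi]; exact hd i
        · subst hi; rw [hdigN _ hJ, hdigN _ hK]; exact hq
        · rw [dig_eq_zero hK (by omega) (by omega)]; exact Nat.zero_le _
      exact ⟨le_of_dig_le hb h, h⟩
  by_cases hC : (k : ℕ) ≤ (j : ℕ) ∧ ∀ i, dig b (k : ℕ) i ≤ dig b (j : ℕ) i
  · obtain ⟨hq, hsle, hd⟩ := hcond.mp hC
    have hmj : (j : ℕ) % b ^ N < b ^ N := Nat.mod_lt _ hpos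
    have e1 : (j : ℕ) / b ^ N * b ^ N + (j : ℕ) % b ^ N = (j : ℕ) := Nat.div_add_mod' _ _
    have e2 : (k : ℕ) / b ^ N * b ^ N + (k : ℕ) % b ^ N = (k : ℕ) := Nat.div_add_mod' _ _
    have e3 : ((j : ℕ) / b ^ N - (k : ℕ) / b ^ N) * b ^ N
        = ((j : ℕ) / b ^ N) * b ^ N - ((k : ℕ) / b ^ N) * b ^ N := Nat.sub_mul _ _ _
    have e4 : ((k : ℕ) / b ^ N) * b ^ N ≤ ((j : ℕ) / b ^ N) * b ^ N :=
      Nat.mul_le_mul_right _ hq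
    have hsub : (j : ℕ) - (k : ℕ) =
        ((j : ℕ) / b ^ N - (k : ℕ) / b ^ N) * b ^ N + ((j : ℕ) % b ^ N - (k : ℕ) % b ^ N) := by
      rw [e3]
      omega
    have hmod : ((j : ℕ) - (k : ℕ)) % b ^ N = (j : ℕ) % b ^ N - (k : ℕ) % b ^ N := by
      rw [hsub, add_comm, Nat.add_mul_mod_self_right, Nat.mod_eq_of_lt (lt_of_le_of_lt (Nat.sub_le _ _) hmj)]
    have hdiv : ((j : ℕ) - (k : ℕ)) / b ^ N = (j : ℕ) / b ^ N - (k : ℕ) / b ^ N := by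
      rw [hsub, add_comm, Nat.add_mul_div_right _ _ hpos,
        Nat.div_eq_of_lt (lt_of_le_of_lt (Nat.sub_le _ _) hmj), zero_add]
    have hdigJKN : dig b ((j : ℕ) - (k : ℕ)) N = (j : ℕ) / b ^ N - (k : ℕ) / b ^ N := by
      show ((j : ℕ) - (k : ℕ)) / b ^ N % b = _
      rw [hdiv, Nat.mod_eq_of_lt (lt_of_le_of_lt (Nat.sub_le _ _) (hq_lt _ hJ))]
    rw [if_pos hC, if_pos hq, if_pos ⟨hsle, hd⟩, Finset.prod_range_succ, hdigJKN]
    rw [Finset.prod_congr rfl fun i hi => by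
      rw [← dig_mod_pow (m := (j : ℕ) - (k : ℕ)) (Finset.mem_range.mp hi), hmod]]
    rw [mul_comm]
  · rw [if_neg hC]
    by_cases hq : (k : ℕ) / b ^ N ≤ (j : ℕ) / b ^ N
    · have h2 : ¬((k : ℕ) % b ^ N ≤ (j : ℕ) % b ^ N ∧
          ∀ i, dig b ((k : ℕ) % b ^ N) i ≤ dig b ((j : ℕ) % b ^ N) i) :=
        fun h => hC (hcond.mpr ⟨hq, h⟩)
      rw [if_neg h2, mul_zero]
    · rw [if_neg hq, zero_mul]

theorem sierpinski_multiplicative' (b N : ℕ) (hb : 2 ≤ b) (x y r : ℕ → ℚ) :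
    Sierp b N x r * Sierp b N y r = Sierp b N (fun i => x i + y i) r := by
  induction N with
  | zero =>
    have h0 : ∀ m : Fin (b ^ 0), (m : ℕ) = 0 := by
      intro m
      have h1 := m.isLt
      have h2 : b ^ 0 = 1 := pow_zero b
      omega
    have hone : ∀ (x' : ℕ → ℚ) (j k : Fin (b ^ 0)), Sierp b 0 x' r j k = 1 := by
      intro x' j k
      unfold Sierp
      have hc : (k : ℕ) ≤ (j : ℕ) ∧ ∀ i, dig b (k : ℕ) i ≤ dig b (j : ℕ) i := by
        rw [h0 j, h0 k]
        exact ⟨le_refl _, fun i => le_refl _⟩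
      rw [if_pos hc]
      simp
    ext j k
    rw [Matrix.mul_apply, hone (fun i => x i + y i) j k]
    rw [Finset.sum_congr rfl fun m _ => by rw [hone x j m, hone y m k, one_mul]]
    simp only [Finset.sum_const, Finset.card_univ, Fintype.card_fin, pow_zero, nsmul_eq_mul,
      Nat.cast_one, mul_one]
  | succ N ih =>
    rw [Sierp_succ b N hb x r, Sierp_succ b N hb y r,
      Sierp_succ b N hb (fun i => x i + y i) r,
      Matrix.submatrix_mul_equiv, ← Matrix.mul_kronecker_mul, S1_mul, ih]


/-- **Multiplicativity of the multivariable Sierpiński matrices:**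
`S_{b,N}(x; r) · S_{b,N}(y; r) = S_{b,N}(x + y; r)`. -/
theorem sierpinski_multiplicative (b N : ℕ) (hb : 2 ≤ b) (x y r : ℕ → ℚ) :
    Sierp b N x r * Sierp b N y r = Sierp b N (fun i => x i + y i) r :=
  sierpinski_multiplicative' b N hb x y r
end
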